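/- Let C be a compact convex subset of ℝ² with nonempty interior. Then there exist a rectangle r centered at the origin and a point z ∈ ℝ² such that z + r ⊆ C ⊆ z + 5·r. -/

import Mathlib

open MeasureTheory Pointwise
open scoped RealInnerProductSpace

set_option maxHeartbeats 1000000

noncomputable section

abbrev Plane := EuclideanSpace ℝ (Fin 2)

/-- A rectangle centered at the origin: all points `s₁ • u + s₂ • v` with
`|s₁| ≤ a`, `|s₂| ≤ b`, for an orthonormal pair `u, v` and positive `a, b`. -/
def IsOriginRectangle (r : Set Plane) : Prop :=
  ∃ (u v : Plane) (a b : ℝ), ‖u‖ = 1 ∧ ‖v‖ = 1 ∧ (inner ℝ u v : ℝ) = 0 ∧ 0 < a ∧ 0 < b ∧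
    r = {p : Plane | ∃ s₁ s₂ : ℝ, |s₁| ≤ a ∧ |s₂| ≤ b ∧ p = s₁ • u + s₂ • v}

lemma rect_aux (C : Set Plane) (hconv : Convex ℝ C)
    (u v p w : Plane) (hu : ‖u‖ = 1) (hv : ‖v‖ = 1) (huv : (inner ℝ u v : ℝ) = 0)
    (hexp : ∀ x : Plane, x = (inner ℝ x u : ℝ) • u + (inner ℝ x v : ℝ) • v)
    (d M : ℝ) (hd : 0 < d) (hM : 0 < M)
    (hp : p ∈ C) (hq : p + d • u ∈ C) (hw : w ∈ C)
    (hfC : ∀ x ∈ C, (inner ℝ (x - p) u : ℝ) ∈ Set.Icc 0 d)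
    (hgC : ∀ x ∈ C, (inner ℝ (x - p) v : ℝ) ∈ Set.Icc (-M) M)
    (hgw : (inner ℝ (w - p) v : ℝ) = M) :
    ∃ (r : Set Plane) (z : Plane), IsOriginRectangle r ∧
      z +ᵥ r ⊆ C ∧ C ⊆ z +ᵥ ((5 : ℝ) • r) := by
  obtain ⟨haw0, hawd⟩ := hfC w hw
  set aw : ℝ := (inner ℝ (w - p) u : ℝ) with haw_def
  have hwexp : w = p + aw • u + M • v := by
    have h := hexp (w - p)
    rw [hgw, ← haw_def] at h
    rw [sub_eq_iff_eq_add] at h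
    rw [h]; module
  refine ⟨{x : Plane | ∃ s₁ s₂ : ℝ, |s₁| ≤ d/4 ∧ |s₂| ≤ M/4 ∧ x = s₁ • u + s₂ • v},
    p + (d/4 + aw/2) • u + (M/4) • v,
    ⟨u, v, d/4, M/4, hu, hv, huv, by positivity, by positivity, rfl⟩, ?_, ?_⟩
  · intro x hx
    rw [Set.mem_vadd_set] at hx
    obtain ⟨y, ⟨s₁, s₂, hs₁, hs₂, rfl⟩, rfl⟩ := hx
    obtain ⟨hs₁l, hs₁r⟩ := abs_le.mp hs₁
    obtain ⟨hs₂l, hs₂r⟩ := abs_le.mp hs₂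
    set lw : ℝ := (M/4 + s₂)/M with hlw_def
    have hlwM : lw * M = M/4 + s₂ := div_mul_cancel₀ _ hM.ne'
    have hlw0 : 0 ≤ lw := div_nonneg (by linarith) hM.le
    have hlwh : lw ≤ 1/2 := by rw [hlw_def, div_le_iff₀ hM]; linarith
    set lq : ℝ := (d/4 + aw/2 + s₁ - lw*aw)/d with hlq_def
    have hlqd : lq * d = d/4 + aw/2 + s₁ - lw*aw := div_mul_cancel₀ _ hd.ne'
    have hlq0 : 0 ≤ lq := by
      apply div_nonneg _ hd.le
      nlinarith [mul_nonneg haw0 (by linarith : (0:ℝ) ≤ 1/2 - lw)]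
    have hlq1 : lq + lw ≤ 1 := by
      have h1 : lq * d ≤ (1 - lw) * d := by
        nlinarith [mul_le_mul_of_nonneg_left hawd (by linarith : (0:ℝ) ≤ 1/2 - lw)]
      have := le_of_mul_le_mul_right (by linarith : lq * d ≤ (1 - lw) * d) hd
      linarith
    have hsum := hconv.sum_mem (t := (Finset.univ : Finset (Fin 3)))
      (w := ![1 - lq - lw, lq, lw]) (z := ![p, p + d • u, w])
      (by intro i _
          fin_cases i
          · show (0:ℝ) ≤ 1 - lq - lw; linarith
          · show (0:ℝ) ≤ lq; linarith
          · show (0:ℝ) ≤ lw; linarith)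
      (by rw [Fin.sum_univ_three]
          show (1 - lq - lw) + lq + lw = 1
          ring)
      (by intro i _
          fin_cases i
          · exact hp
          · exact hq
          · exact hw)
    rw [Fin.sum_univ_three] at hsum
    have hxe : (p + (d/4 + aw/2) • u + (M/4) • v) +ᵥ (s₁ • u + s₂ • v)
        = (1 - lq - lw) • p + lq • (p + d • u) + lw • w := by
      rw [vadd_eq_add, hwexp]
      match_scalars <;> linarith [hlqd, hlwM]
    rw [hxe]
    exact hsum
  · intro x hx
    obtain ⟨hα0, hαd⟩ := hfC x hx
    obtain ⟨hβl, hβr⟩ := hgC x hx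
    set α : ℝ := (inner ℝ (x - p) u : ℝ) with hα_def
    set β : ℝ := (inner ℝ (x - p) v : ℝ) with hβ_def
    have hxexp : x = p + α • u + β • v := by
      have h := hexp (x - p)
      rw [← hα_def, ← hβ_def, sub_eq_iff_eq_add] at h
      rw [h]; module
    rw [Set.mem_vadd_set]
    refine ⟨(5:ℝ) • (((α - d/4 - aw/2)/5) • u + ((β - M/4)/5) • v),
      Set.smul_mem_smul_set ⟨(α - d/4 - aw/2)/5, (β - M/4)/5, ?_, ?_, rfl⟩, ?_⟩
    · rw [abs_le]; constructor <;> linarith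
    · rw [abs_le]; constructor <;> linarith
    · rw [vadd_eq_add]
      rw [hxexp]
      match_scalars <;> ring

theorem rect_approx (C : Set Plane) (hC : IsCompact C) (hconv : Convex ℝ C)
    (hint : (interior C).Nonempty) :
    ∃ (r : Set Plane) (z : Plane), IsOriginRectangle r ∧
      z +ᵥ r ⊆ C ∧ C ⊆ z +ᵥ ((5 : ℝ) • r) := by
  obtain ⟨x₀, hx₀⟩ := hint
  rw [mem_interior_iff_mem_nhds] at hx₀
  obtain ⟨ε, hε, hball⟩ := Metric.mem_nhds_iff.mp hx₀
  have hx₀C : x₀ ∈ C := hball (Metric.mem_ball_self hε)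
  have hCne : C.Nonempty := ⟨x₀, hx₀C⟩
  -- a diametral pair
  obtain ⟨⟨p, q⟩, hpqC, hmax⟩ := (hC.prod hC).exists_isMaxOn (hCne.prod hCne)
      continuous_dist.continuousOn
  have hpC : p ∈ C := hpqC.1
  have hqC : q ∈ C := hpqC.2
  set d : ℝ := dist p q with hd_def
  have hmax' : ∀ x ∈ C, ∀ y ∈ C, dist x y ≤ d :=
    fun x hx y hy => isMaxOn_iff.mp hmax (x, y) (Set.mk_mem_prod hx hy)
  -- small balls give points in C
  have hball_mem : ∀ e : Plane, ‖e‖ = 1 → x₀ + (ε/2) • e ∈ C := by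
    intro e he
    apply hball
    rw [Metric.mem_ball, dist_eq_norm, add_sub_cancel_left, norm_smul, he]
    simp [abs_of_pos hε]
    linarith
  have hd : 0 < d := by
    have h1 : x₀ + (ε/2) • EuclideanSpace.single (0 : Fin 2) (1:ℝ) ∈ C := by
      apply hball_mem
      simp [EuclideanSpace.norm_single]
    have h2 : dist (x₀ + (ε/2) • EuclideanSpace.single (0 : Fin 2) (1:ℝ)) x₀ ≤ d :=
      hmax' _ h1 _ hx₀C
    rw [dist_eq_norm, add_sub_cancel_left, norm_smul] at h2
    rw [EuclideanSpace.norm_single] at h2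
    simp [abs_of_pos hε] at h2
    linarith
  set u : Plane := d⁻¹ • (q - p) with hu_def
  have hqp_norm : ‖q - p‖ = d := by rw [← dist_eq_norm, dist_comm]
  have hu : ‖u‖ = 1 := by
    rw [hu_def, norm_smul, hqp_norm, Real.norm_eq_abs, abs_of_pos (inv_pos.mpr hd),
      inv_mul_cancel₀ hd.ne']
  have husq : u 0 ^ 2 + u 1 ^ 2 = 1 := by
    have h := real_inner_self_eq_norm_sq u
    rw [hu] at h
    simp only [PiLp.inner_apply, Fin.sum_univ_two, RCLike.inner_apply, conj_trivial] at h
    nlinarith [h]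
  set v : Plane := (WithLp.equiv 2 (Fin 2 → ℝ)).symm ![-(u 1), u 0] with hv_def
  have hv0 : v 0 = -(u 1) := rfl
  have hv1 : v 1 = u 0 := rfl
  have hv : ‖v‖ = 1 := by
    have h2 := real_inner_self_eq_norm_sq v
    simp only [PiLp.inner_apply, Fin.sum_univ_two, RCLike.inner_apply, conj_trivial,
      hv0, hv1] at h2
    nlinarith [h2, norm_nonneg v, husq]
  have huv : (inner ℝ u v : ℝ) = 0 := by
    simp [PiLp.inner_apply, Fin.sum_univ_two, RCLike.inner_apply, conj_trivial, hv0, hv1]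
    ring
  have hexp : ∀ x : Plane, x = (inner ℝ x u : ℝ) • u + (inner ℝ x v : ℝ) • v := by
    intro x
    ext i
    fin_cases i
    · simp [PiLp.inner_apply, Fin.sum_univ_two, RCLike.inner_apply, conj_trivial,
        hv0, hv1, PiLp.add_apply, PiLp.smul_apply, smul_eq_mul]
      linear_combination (-(x 0)) * husq
    · simp [PiLp.inner_apply, Fin.sum_univ_two, RCLike.inner_apply, conj_trivial,
        hv0, hv1, PiLp.add_apply, PiLp.smul_apply, smul_eq_mul]
      linear_combination (-(x 1)) * husq
  -- p + d • u = q
  have hq' : p + d • u ∈ C := by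
    have : p + d • u = q := by
      rw [hu_def, smul_smul, mul_inv_cancel₀ hd.ne', one_smul]
      abel
    rw [this]; exact hqC
  -- horizontal bounds
  have hqpu : (inner ℝ (q - p) u : ℝ) = d := by
    rw [hu_def, real_inner_smul_right, real_inner_self_eq_norm_mul_norm, hqp_norm]
    field_simp
  have hfC : ∀ x ∈ C, (inner ℝ (x - p) u : ℝ) ∈ Set.Icc 0 d := by
    intro x hx
    constructor
    · have hsplit : x - p = (x - q) + (q - p) := by abel
      have h1 : (inner ℝ (q - x) u : ℝ) ≤ ‖q - x‖ * ‖u‖ := real_inner_le_norm _ _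
      rw [hu, mul_one, ← dist_eq_norm] at h1
      have h2 : dist q x ≤ d := hmax' _ hqC _ hx
      have h3 : (inner ℝ (x - q) u : ℝ) = -(inner ℝ (q - x) u : ℝ) := by
        rw [← inner_neg_left, neg_sub]
      rw [hsplit, inner_add_left, hqpu, h3]
      linarith
    · have h1 : (inner ℝ (x - p) u : ℝ) ≤ ‖x - p‖ * ‖u‖ := real_inner_le_norm _ _
      rw [hu, mul_one, ← dist_eq_norm] at h1
      have h2 : dist x p ≤ d := hmax' _ hx _ hpC
      linarith
  -- vertical extrema
  set g : Plane → ℝ := fun x => (inner ℝ (x - p) v : ℝ) with hg_def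
  have hgcont : Continuous g := by
    apply Continuous.inner (continuous_id.sub continuous_const) continuous_const
  obtain ⟨w₁, hw₁C, hw₁max⟩ := hC.exists_isMaxOn hCne hgcont.continuousOn
  obtain ⟨w₂, hw₂C, hw₂min⟩ := hC.exists_isMinOn hCne hgcont.continuousOn
  have hw₁max' : ∀ x ∈ C, g x ≤ g w₁ := fun x hx => isMaxOn_iff.mp hw₁max x hx
  have hw₂min' : ∀ x ∈ C, g w₂ ≤ g x := fun x hx => isMinOn_iff.mp hw₂min x hx
  have hgp : g p = 0 := by simp [hg_def]
  have hvv : (inner ℝ v v : ℝ) = 1 := by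
    rw [real_inner_self_eq_norm_mul_norm, hv]; norm_num
  have hgplus : ∀ (c : ℝ), g (x₀ + c • v) = g x₀ + c := by
    intro c
    simp only [hg_def]
    have : x₀ + c • v - p = (x₀ - p) + c • v := by abel
    rw [this, inner_add_left, real_inner_smul_left, hvv, mul_one]
  have hgap1 : g x₀ + ε/2 ≤ g w₁ := by
    have := hw₁max' _ (hball_mem v hv)
    rwa [hgplus] at this
  have hgap2 : g w₂ ≤ g x₀ - ε/2 := by
    have h := hw₂min' _ (hball_mem (-v) (by rw [norm_neg, hv]))
    have h2 : x₀ + (ε/2) • (-v) = x₀ + (-(ε/2)) • v := by module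
    rw [h2, hgplus] at h
    linarith
  rcases le_total (-(g w₂)) (g w₁) with hcase | hcase
  · -- upward apex
    have hM : 0 < g w₁ := by linarith
    exact rect_aux C hconv u v p w₁ hu hv huv hexp d (g w₁) hd hM hpC hq' hw₁C hfC
      (fun x hx => ⟨by have := hw₂min' x hx; simp only [hg_def] at *; linarith,
        by have := hw₁max' x hx; simp only [hg_def] at *; linarith⟩)
      rfl
  · -- downward apex: use -v
    have hM : 0 < -(g w₂) := by linarith
    have hv' : ‖-v‖ = 1 := by rw [norm_neg, hv]
    have huv' : (inner ℝ u (-v) : ℝ) = 0 := by rw [inner_neg_right, huv, neg_zero]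
    have hexp' : ∀ x : Plane, x = (inner ℝ x u : ℝ) • u + (inner ℝ x (-v) : ℝ) • (-v) := by
      intro x
      rw [inner_neg_right, neg_smul, smul_neg, neg_neg]
      exact hexp x
    have hgw' : (inner ℝ (w₂ - p) (-v) : ℝ) = -(g w₂) := by
      rw [inner_neg_right]
    exact rect_aux C hconv u (-v) p w₂ hu hv' huv' hexp' d (-(g w₂)) hd hM hpC hq' hw₂C hfC
      (fun x hx => by
        rw [Set.mem_Icc, inner_neg_right]
        constructor
        · have := hw₁max' x hx; simp only [hg_def] at *; linarith
        · have := hw₂min' x hx; simp only [hg_def] at *; linarith)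
      hgw'
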